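/- Let α ∈ ℝ and let w : ℝ → ℝ be twice differentiable with w''(z) = 2·w(z)³ + z·w(z) + α for all z ∈ ℝ. Then the function σ(z) := (w'(z))² − w(z)⁴ − z·w(z)² − (2α − 1)·w(z) − z²/4 satisfies σ'(z) = w'(z) − w(z)² − z/2 for all z ∈ ℝ. -/

import Mathlib

/-- **`n = 1` instance of Lemma 3.1 of the paper**: if `w` is twice differentiable with
`w'' = 2w³ + zw + α`, then `σ(z) = (w')² - w⁴ - z w² - (2α - 1) w - z²/4` satisfies
`σ' = w' - w² - z/2`. -/
theorem sigma_derivative_PII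
    (α : ℝ) (w : ℝ → ℝ)
    (hw1 : Differentiable ℝ w) (hw2 : Differentiable ℝ (deriv w))
    (hP : ∀ z : ℝ, deriv (deriv w) z = 2 * (w z) ^ 3 + z * w z + α)
    (σ : ℝ → ℝ)
    (hσ : ∀ z : ℝ, σ z =
      (deriv w z) ^ 2 - (w z) ^ 4 - z * (w z) ^ 2 - (2 * α - 1) * w z - z ^ 2 / 4) :
    ∀ z : ℝ, deriv σ z = deriv w z - (w z) ^ 2 - z / 2 := by
  intro z
  have hσf : σ = fun z => (deriv w z) ^ 2 - (w z) ^ 4 - z * (w z) ^ 2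
      - (2 * α - 1) * w z - z ^ 2 / 4 := funext hσ
  have hw : HasDerivAt w (deriv w z) z := (hw1 z).hasDerivAt
  have hw' : HasDerivAt (deriv w) (deriv (deriv w) z) z := (hw2 z).hasDerivAt
  have h : HasDerivAt σ (deriv w z - (w z) ^ 2 - z / 2) z := by
    rw [hσf]
    have H := ((((hw'.pow 2).sub (hw.pow 4)).sub
        ((hasDerivAt_id z).mul (hw.pow 2))).sub
        ((hasDerivAt_const z (2 * α - 1)).mul hw)).sub
        (((hasDerivAt_id z).pow 2).div_const 4)
    convert H using 1
    · rfl
    · rfl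
    · rfl
    simp only [id_eq, Pi.pow_apply]
    rw [hP z]
    push_cast
    ring
  exact h.deriv
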